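/- Let A be an expanding 2×2 matrix with characteristic polynomial x² + 3x + 3 and v with {v, Av} linearly independent. Then (A − I)(A² + 3A + 3I) = 0 implies A² + A − I = 2(A + I)^{−1}, and hence v = A^{−2}(v − Av) + A^{−3}v + ∑_{i=0}^{∞} A^{−2i}(A^{−4}(Av − v) + A^{−5}(v − Av)), so v ∈ T − T for T = T(A, {0, v, Av}). -/

import Mathlib

open Matrix Polynomial
open scoped Pointwise

/-- All (complex) eigenvalues of `A` have modulus strictly larger than `1`. -/
def IsExpandingMat (A : Matrix (Fin 2) (Fin 2) ℝ) : Prop :=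
  ∀ μ ∈ spectrum ℂ (A.map (algebraMap ℝ ℂ)), 1 < ‖μ‖

/-- The self-affine set `T(A, D) = {∑_{i≥1} A^{-i} d_i : d_i ∈ D}`. -/
noncomputable def selfAffine (A : Matrix (Fin 2) (Fin 2) ℝ) (D : Set (Fin 2 → ℝ)) :
    Set (Fin 2 → ℝ) :=
  { x | ∃ d : ℕ → (Fin 2 → ℝ), (∀ n, d n ∈ D) ∧
      HasSum (fun n => (A⁻¹ ^ (n + 1)) *ᵥ d n) x }

set_option maxRecDepth 8000 in
set_option maxHeartbeats 1000000 in
theorem stmt19 (A : Matrix (Fin 2) (Fin 2) ℝ) (hexp : IsExpandingMat A)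
    (hchar : A.charpoly = X ^ 2 + C (3 : ℝ) * X + C 3)
    (v : Fin 2 → ℝ) (hv : LinearIndependent ℝ ![v, A *ᵥ v])
    (T : Set (Fin 2 → ℝ)) (hT : T = selfAffine A {0, v, A *ᵥ v}) :
    (A - 1) * (A * A + (3 : ℝ) • A + (3 : ℝ) • (1 : Matrix (Fin 2) (Fin 2) ℝ)) = 0 ∧
    A * A + A - 1 = (2 : ℝ) • (A + 1)⁻¹ ∧
    HasSum (fun i : ℕ => A⁻¹ ^ (2 * i) *ᵥ
        (A⁻¹ ^ 4 *ᵥ (A *ᵥ v - v) + A⁻¹ ^ 5 *ᵥ (v - A *ᵥ v)))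
      (v - (A⁻¹ ^ 2 *ᵥ (v - A *ᵥ v) + A⁻¹ ^ 3 *ᵥ v)) ∧
    v ∈ T - T := by
  -- Cayley–Hamilton
  have hA2 : A * A + (3:ℝ) • A + (3:ℝ) • (1 : Matrix (Fin 2) (Fin 2) ℝ) = 0 := by
    have h := Matrix.aeval_self_charpoly A
    rw [hchar] at h
    simp only [map_add, _root_.map_mul, aeval_X_pow, aeval_C, aeval_X, sq,
      Algebra.algebraMap_eq_smul_one, smul_mul_assoc, one_mul] at h
    exact h
  have hAA : A * A = (-3:ℝ) • A + (-3:ℝ) • (1 : Matrix (Fin 2) (Fin 2) ℝ) := by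
    rw [eq_comm, ← sub_eq_zero] at hA2 ⊢
    rw [← hA2]; module
  -- multiplication rule in the commutative subalgebra spanned by A and 1
  have mulAB : ∀ (a b c d : ℝ), ((a•A + b•(1:Matrix (Fin 2) (Fin 2) ℝ)) * (c•A + d•1))
      = (a*c*(-3) + (a*d + b*c))•A + (a*c*(-3) + b*d)•(1:Matrix (Fin 2) (Fin 2) ℝ) := by
    intro a b c d
    have e1 : (a•A + b•(1:Matrix (Fin 2) (Fin 2) ℝ)) * (c•A + d•1)
        = (a*c)•(A*A) + (a*d+b*c)•A + (b*d)•(1:Matrix (Fin 2) (Fin 2) ℝ) := by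
      simp only [mul_add, add_mul, smul_mul_assoc, mul_smul_comm, one_mul, mul_one, smul_smul]
      module
    rw [e1, hAA]; module
  have eA : A = ((1:ℝ)•A + (0:ℝ)•(1:Matrix (Fin 2) (Fin 2) ℝ)) := by module
  -- inverse of A and its powers
  have hA1 : A * ((-(1/3):ℝ)•A + (-1:ℝ)•(1:Matrix (Fin 2) (Fin 2) ℝ)) = 1 := by
    nth_rewrite 1 [eA]
    rw [mulAB]; norm_num
  have hB1 : A⁻¹ = (-(1/3):ℝ)•A + (-1:ℝ)•(1:Matrix (Fin 2) (Fin 2) ℝ) :=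
    Matrix.inv_eq_right_inv hA1
  have hB2 : A⁻¹^2 = (1/3:ℝ)•A + (2/3:ℝ)•(1:Matrix (Fin 2) (Fin 2) ℝ) := by
    rw [pow_two, hB1, mulAB]; norm_num
  have hB3 : A⁻¹^3 = (-(2/9):ℝ)•A + (-(1/3):ℝ)•(1:Matrix (Fin 2) (Fin 2) ℝ) := by
    rw [pow_succ, hB2, hB1, mulAB]; norm_num
  have hB4 : A⁻¹^4 = (1/9:ℝ)•A + (1/9:ℝ)•(1:Matrix (Fin 2) (Fin 2) ℝ) := by
    rw [pow_succ, hB3, hB1, mulAB]; norm_num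
  have hB5 : A⁻¹^5 = (-(1/27):ℝ)•A + (0:ℝ)•(1:Matrix (Fin 2) (Fin 2) ℝ) := by
    rw [pow_succ, hB4, hB1, mulAB]; norm_num
  -- part 1
  have part1 : (A - 1) * (A * A + (3:ℝ) • A + (3:ℝ) • (1 : Matrix (Fin 2) (Fin 2) ℝ)) = 0 := by
    rw [hA2, mul_zero]
  -- part 2
  have hAp1 : (A + 1)⁻¹ = (-1:ℝ)•A + (-2:ℝ)•(1:Matrix (Fin 2) (Fin 2) ℝ) := by
    apply Matrix.inv_eq_right_inv
    have e : A + 1 = ((1:ℝ)•A + (1:ℝ)•(1:Matrix (Fin 2) (Fin 2) ℝ)) := by module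
    rw [e, mulAB]; norm_num
  have part2 : A * A + A - 1 = (2:ℝ) • (A + 1)⁻¹ := by
    rw [hAp1, hAA]; module
  -- quadratic relation for M = A⁻¹ ^ 2 and a left inverse of 1 - M
  have hM2 : A⁻¹^2 * A⁻¹^2
      = (1/3:ℝ) • (A⁻¹^2) + (-(1/9):ℝ) • (1:Matrix (Fin 2) (Fin 2) ℝ) := by
    rw [hB2, mulAB]; norm_num; module
  have hN : ((3/7:ℝ)•A + (12/7:ℝ)•(1:Matrix (Fin 2) (Fin 2) ℝ)) * (1 - A⁻¹^2) = 1 := by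
    have e : (1:Matrix (Fin 2) (Fin 2) ℝ) - A⁻¹^2
        = (-(1/3):ℝ)•A + (1/3:ℝ)•(1:Matrix (Fin 2) (Fin 2) ℝ) := by rw [hB2]; module
    rw [e, mulAB]; norm_num
  -- geometric decay of (A⁻¹ ^ 2) ^ k
  have hrec : ∀ (z : Fin 2 → ℝ) (k : ℕ),
      (A⁻¹^2)^(k+2) *ᵥ z = (1/3:ℝ) • ((A⁻¹^2)^(k+1) *ᵥ z) + (-(1/9):ℝ) • ((A⁻¹^2)^k *ᵥ z) := by
    intro z k
    have e : (A⁻¹^2)^(k+2) = (1/3:ℝ) • (A⁻¹^2)^(k+1) + (-(1/9):ℝ) • (A⁻¹^2)^k := by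
      have h : (A⁻¹^2)^(k+2) = (A⁻¹^2 * A⁻¹^2) * (A⁻¹^2)^k := by
        rw [← pow_two, ← pow_add]; ring_nf
      rw [h, hM2, Matrix.add_mul, Matrix.smul_mul, Matrix.smul_mul, Matrix.one_mul,
        ← pow_succ']
    rw [e, Matrix.add_mulVec, Matrix.smul_mulVec, Matrix.smul_mulVec]
  have hperz : ∀ (z : Fin 2 → ℝ) (k : ℕ),
      ‖(A⁻¹^2)^k *ᵥ z‖ ≤ max ‖z‖ ((3/2) * ‖A⁻¹^2 *ᵥ z‖) * (2/3)^k := by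
    intro z k
    induction k using Nat.strong_induction_on with
    | _ k ih =>
      match k with
      | 0 => simpa using le_max_left _ _
      | 1 =>
        rw [pow_one, pow_one]
        have h := le_max_right ‖z‖ ((3/2) * ‖A⁻¹^2 *ᵥ z‖)
        linarith
      | (k+2) =>
        have h1 := ih (k+1) (by omega)
        have h0 := ih k (by omega)
        rw [hrec]
        calc ‖(1/3:ℝ) • ((A⁻¹^2)^(k+1) *ᵥ z) + (-(1/9):ℝ) • ((A⁻¹^2)^k *ᵥ z)‖
            ≤ (1/3)*‖(A⁻¹^2)^(k+1) *ᵥ z‖ + (1/9)*‖(A⁻¹^2)^k *ᵥ z‖ := by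
              refine (norm_add_le _ _).trans ?_
              rw [norm_smul, norm_smul]
              simp [abs_of_nonneg]
          _ ≤ (1/3)*(max ‖z‖ ((3/2) * ‖A⁻¹^2 *ᵥ z‖) * (2/3)^(k+1))
              + (1/9)*(max ‖z‖ ((3/2) * ‖A⁻¹^2 *ᵥ z‖) * (2/3)^k) := by gcongr
          _ = max ‖z‖ ((3/2) * ‖A⁻¹^2 *ᵥ z‖) * (2/3)^k * (1/3) := by ring
          _ ≤ max ‖z‖ ((3/2) * ‖A⁻¹^2 *ᵥ z‖) * (2/3)^k * (4/9) := by
              have hmx : (0:ℝ) ≤ max ‖z‖ ((3/2) * ‖A⁻¹^2 *ᵥ z‖) :=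
                le_trans (norm_nonneg z) (le_max_left _ _)
              have hp : (0:ℝ) ≤ (2/3:ℝ)^k := by positivity
              nlinarith [mul_nonneg hmx hp]
          _ = max ‖z‖ ((3/2) * ‖A⁻¹^2 *ᵥ z‖) * (2/3)^(k+2) := by ring
  obtain ⟨C, hC, hkey⟩ : ∃ C : ℝ, 0 ≤ C ∧
      ∀ (z : Fin 2 → ℝ) (k : ℕ), ‖(A⁻¹^2)^k *ᵥ z‖ ≤ C * ‖z‖ * (2/3)^k := by
    set L := (Matrix.mulVecLin (A⁻¹^2)).toContinuousLinearMap with hL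
    refine ⟨max 1 ((3/2) * ‖L‖), le_trans zero_le_one (le_max_left _ _), ?_⟩
    intro z k
    refine (hperz z k).trans ?_
    gcongr
    have hLz : ‖A⁻¹^2 *ᵥ z‖ ≤ ‖L‖ * ‖z‖ := by
      simpa [hL, Matrix.mulVecLin_apply] using L.le_opNorm z
    have h0 : (0:ℝ) ≤ ‖z‖ := norm_nonneg z
    rw [max_le_iff]
    constructor
    · calc ‖z‖ = 1 * ‖z‖ := by ring
        _ ≤ max 1 ((3/2) * ‖L‖) * ‖z‖ := by gcongr; exact le_max_left _ _
    · calc (3/2) * ‖A⁻¹^2 *ᵥ z‖ ≤ (3/2) * (‖L‖ * ‖z‖) := by gcongr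
        _ = ((3/2) * ‖L‖) * ‖z‖ := by ring
        _ ≤ max 1 ((3/2) * ‖L‖) * ‖z‖ := by gcongr; exact le_max_right _ _
  -- notation
  set w : Fin 2 → ℝ := A⁻¹ ^ 4 *ᵥ (A *ᵥ v - v) + A⁻¹ ^ 5 *ᵥ (v - A *ᵥ v) with hw
  set x' : Fin 2 → ℝ := v - (A⁻¹ ^ 2 *ᵥ (v - A *ᵥ v) + A⁻¹ ^ 3 *ᵥ v) with hx'
  -- vector identity
  have hAAv : A *ᵥ (A *ᵥ v) = (-3:ℝ) • (A *ᵥ v) + (-3:ℝ) • v := by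
    rw [Matrix.mulVec_mulVec, hAA, Matrix.add_mulVec, Matrix.smul_mulVec,
      Matrix.smul_mulVec, Matrix.one_mulVec]
  have hxw : x' - A⁻¹^2 *ᵥ x' = w := by
    rw [hx', hw, hB2, hB3, hB4, hB5]
    simp only [Matrix.add_mulVec, Matrix.smul_mulVec, Matrix.one_mulVec,
      Matrix.mulVec_sub, Matrix.mulVec_add, Matrix.mulVec_smul, hAAv, smul_add, smul_sub,
      smul_smul]
    module
  -- the main HasSum (third conjunct)
  have hgeo : Summable (fun i : ℕ => ((2:ℝ)/3)^i) :=
    summable_geometric_of_lt_one (by norm_num) (by norm_num)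
  have hsummM : ∀ z : Fin 2 → ℝ, Summable (fun k : ℕ => (A⁻¹^2)^k *ᵥ z) := by
    intro z
    refine Summable.of_norm_bounded (g := (fun i => (C * ‖z‖) * (2/3)^i))
      (hgeo.mul_left _) (fun i => ?_)
    simpa [mul_assoc] using hkey z i
  have hsumm : Summable (fun i : ℕ => A⁻¹^(2*i) *ᵥ w) := by
    refine (hsummM w).congr (fun i => ?_)
    rw [pow_mul]
  have hmain : HasSum (fun i : ℕ => A⁻¹^(2*i) *ᵥ w) x' := by
    set S := ∑' i, A⁻¹^(2*i) *ᵥ w with hSdef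
    have hS : HasSum (fun i : ℕ => A⁻¹^(2*i) *ᵥ w) S := hsumm.hasSum
    have hshift : HasSum (fun i : ℕ => A⁻¹^(2*(i+1)) *ᵥ w) (A⁻¹^2 *ᵥ S) := by
      have h2 := ((Matrix.mulVecLin (A⁻¹^2)).toContinuousLinearMap).hasSum hS
      simp only [LinearMap.coe_toContinuousLinearMap', Matrix.mulVecLin_apply] at h2
      refine HasSum.congr_fun h2 ?_
      intro b
      rw [Matrix.mulVec_mulVec, ← pow_add]
      ring_nf
    have hfull := (hasSum_nat_add_iff (f := fun i : ℕ => A⁻¹^(2*i) *ᵥ w) 1).mp hshift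
    simp only [Finset.range_one, Finset.sum_singleton, Nat.mul_zero, pow_zero,
      Matrix.one_mulVec] at hfull
    have hSval : S = A⁻¹ ^ 2 *ᵥ S + w := hS.unique hfull
    have hSx : S = x' := by
      have h1 : (1 - A⁻¹^2) *ᵥ S = (1 - A⁻¹^2) *ᵥ x' := by
        rw [Matrix.sub_mulVec, Matrix.sub_mulVec, Matrix.one_mulVec, Matrix.one_mulVec, hxw]
        rw [sub_eq_iff_eq_add]
        exact hSval.trans (add_comm _ _)
      have h2 := congrArg (fun y => ((3/7:ℝ)•A + (12/7:ℝ)•(1:Matrix (Fin 2) (Fin 2) ℝ)) *ᵥ y) h1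
      simp only [Matrix.mulVec_mulVec] at h2
      rw [hN, Matrix.one_mulVec, Matrix.one_mulVec] at h2
      exact h2
    rw [← hSx]
    exact hS
  refine ⟨part1, part2, hmain, ?_⟩
  -- membership in T - T
  -- operator norm bound for A⁻¹
  set LB := (Matrix.mulVecLin A⁻¹).toContinuousLinearMap with hLB
  have hLBz : ∀ z : Fin 2 → ℝ, ‖A⁻¹ *ᵥ z‖ ≤ ‖LB‖ * ‖z‖ := by
    intro z
    simpa [hLB, Matrix.mulVecLin_apply] using LB.le_opNorm z
  set K : ℝ := max ‖v‖ ‖A *ᵥ v‖ with hK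
  have hK0 : (0:ℝ) ≤ K := le_trans (norm_nonneg v) (le_max_left _ _)
  -- summability of digit series
  have hdig : ∀ d : ℕ → (Fin 2 → ℝ), (∀ n, d n ∈ ({0, v, A *ᵥ v} : Set (Fin 2 → ℝ))) →
      Summable (fun n => A⁻¹^(n+1) *ᵥ d n) := by
    intro d hd
    have hdK : ∀ n, ‖d n‖ ≤ K := by
      intro n
      rcases hd n with h | h | h <;> rw [h]
      · simpa using hK0
      · exact le_max_left _ _
      · exact le_max_right _ _
    have hEv : Summable (fun k : ℕ => A⁻¹^(2*k+1) *ᵥ d (2*k)) := by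
      refine Summable.of_norm_bounded (g := (fun k => (C * (‖LB‖ * K)) * (2/3)^k))
        (hgeo.mul_left _) (fun k => ?_)
      have e : A⁻¹^(2*k+1) *ᵥ d (2*k) = (A⁻¹^2)^k *ᵥ (A⁻¹ *ᵥ d (2*k)) := by
        rw [Matrix.mulVec_mulVec, ← pow_mul, ← pow_succ]
      rw [e]
      calc ‖(A⁻¹^2)^k *ᵥ (A⁻¹ *ᵥ d (2*k))‖ ≤ C * ‖A⁻¹ *ᵥ d (2*k)‖ * (2/3)^k := hkey _ k
        _ ≤ C * (‖LB‖ * K) * (2/3)^k := by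
            have h1 : ‖A⁻¹ *ᵥ d (2*k)‖ ≤ ‖LB‖ * K := by
              refine (hLBz _).trans ?_
              have := hdK (2*k)
              have h2 : (0:ℝ) ≤ ‖LB‖ := norm_nonneg _
              nlinarith
            have hp : (0:ℝ) ≤ (2/3:ℝ)^k := by positivity
            exact mul_le_mul_of_nonneg_right (mul_le_mul_of_nonneg_left h1 hC) hp
        _ = (C * (‖LB‖ * K)) * (2/3)^k := by ring
    have hOd : Summable (fun k : ℕ => A⁻¹^(2*k+1+1) *ᵥ d (2*k+1)) := by
      refine Summable.of_norm_bounded (g := (fun k => (C * K) * (2/3)^k))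
        (hgeo.mul_left _) (fun k => ?_)
      have e : A⁻¹^(2*k+1+1) *ᵥ d (2*k+1) = (A⁻¹^2)^(k+1) *ᵥ (d (2*k+1)) := by
        have h : 2*k+1+1 = 2*(k+1) := by ring
        rw [h, pow_mul]
      rw [e]
      calc ‖(A⁻¹^2)^(k+1) *ᵥ d (2*k+1)‖ ≤ C * ‖d (2*k+1)‖ * (2/3)^(k+1) := hkey _ (k+1)
        _ ≤ (C * K) * (2/3)^(k+1) := by
            have h1 := hdK (2*k+1)
            exact mul_le_mul_of_nonneg_right (mul_le_mul_of_nonneg_left h1 hC)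
              (by positivity)
        _ ≤ (C * K) * (2/3)^k := by
            refine mul_le_mul_of_nonneg_left ?_ (mul_nonneg hC hK0)
            exact pow_le_pow_of_le_one (by norm_num) (by norm_num) (Nat.le_succ k)
    exact (HasSum.even_add_odd (f := fun n => A⁻¹^(n+1) *ᵥ d n)
      hEv.hasSum hOd.hasSum).summable
  -- digit sequences
  set d1 : ℕ → (Fin 2 → ℝ) := fun n =>
    if n = 0 then 0 else if n = 1 then v else if n % 2 = 0 then v else A *ᵥ v with hd1
  set d2 : ℕ → (Fin 2 → ℝ) := fun n =>
    if n ≤ 2 then (if n = 1 then A *ᵥ v else 0) else if n % 2 = 1 then v else A *ᵥ v with hd2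
  have hd1mem : ∀ n, d1 n ∈ ({0, v, A *ᵥ v} : Set (Fin 2 → ℝ)) := by
    intro n; rw [hd1]; dsimp only; split_ifs <;> simp
  have hd2mem : ∀ n, d2 n ∈ ({0, v, A *ᵥ v} : Set (Fin 2 → ℝ)) := by
    intro n; rw [hd2]; dsimp only; split_ifs <;> simp
  have hs1 := hdig d1 hd1mem
  have hs2 := hdig d2 hd2mem
  -- the difference series sums to v
  set a : Fin 2 → ℝ := A⁻¹ ^ 4 *ᵥ (A *ᵥ v - v) with ha
  set b : Fin 2 → ℝ := A⁻¹ ^ 5 *ᵥ (v - A *ᵥ v) with hb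
  have hSa : HasSum (fun k : ℕ => (A⁻¹^2)^k *ᵥ a) (∑' k, (A⁻¹^2)^k *ᵥ a) :=
    (hsummM a).hasSum
  have hSb : HasSum (fun k : ℕ => (A⁻¹^2)^k *ᵥ b) (∑' k, (A⁻¹^2)^k *ᵥ b) :=
    (hsummM b).hasSum
  have hab : HasSum (fun i : ℕ => A⁻¹^(2*i) *ᵥ w)
      ((∑' k, (A⁻¹^2)^k *ᵥ a) + (∑' k, (A⁻¹^2)^k *ᵥ b)) := by
    refine HasSum.congr_fun (hSa.add hSb) (fun i => ?_)
    rw [pow_mul, ← Matrix.mulVec_add, ← hw]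
  have habx : (∑' k, (A⁻¹^2)^k *ᵥ a) + (∑' k, (A⁻¹^2)^k *ᵥ b) = x' := hab.unique hmain
  -- tail of the difference series
  have htail : HasSum (fun m : ℕ => A⁻¹^(m+3+1) *ᵥ (d1 (m+3) - d2 (m+3))) x' := by
    rw [← habx]
    refine HasSum.even_add_odd
      (f := fun m : ℕ => A⁻¹^(m+3+1) *ᵥ (d1 (m+3) - d2 (m+3))) ?_ ?_
    · refine HasSum.congr_fun hSa (fun k => ?_)
      show A⁻¹^(2*k+3+1) *ᵥ (d1 (2*k+3) - d2 (2*k+3)) = (A⁻¹ ^ 2) ^ k *ᵥ a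
      have h1 : d1 (2*k+3) = A *ᵥ v := by
        rw [hd1]
        have c0 : ¬(2*k+3 = 0) := by omega
        have c1 : ¬(2*k+3 = 1) := by omega
        have c2 : ¬((2*k+3) % 2 = 0) := by omega
        simp [c0, c1, c2]
      have h2 : d2 (2*k+3) = v := by
        rw [hd2]
        have c0 : ¬(2*k+3 ≤ 2) := by omega
        have c2 : (2*k+3) % 2 = 1 := by omega
        simp [c0, c2]
      have hexps : 2*k+3+1 = 2*k+4 := by omega
      rw [h1, h2, hexps, ha, Matrix.mulVec_mulVec, ← pow_mul, ← pow_add]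
    · refine HasSum.congr_fun hSb (fun k => ?_)
      show A⁻¹^(2*k+1+3+1) *ᵥ (d1 (2*k+1+3) - d2 (2*k+1+3)) = (A⁻¹ ^ 2) ^ k *ᵥ b
      have h1 : d1 (2*k+1+3) = v := by
        rw [hd1]
        have c0 : ¬(2*k+1+3 = 0) := by omega
        have c1 : ¬(2*k+1+3 = 1) := by omega
        have c2 : (2*k+1+3) % 2 = 0 := by omega
        simp [c0, c1, c2]
      have h2 : d2 (2*k+1+3) = A *ᵥ v := by
        rw [hd2]
        have c0 : ¬(2*k+1+3 ≤ 2) := by omega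
        have c2 : ¬((2*k+1+3) % 2 = 1) := by omega
        simp [c0, c2]
      have hexps : 2*k+1+3+1 = 2*k+5 := by omega
      rw [h1, h2, hexps, hb, Matrix.mulVec_mulVec, ← pow_mul, ← pow_add]
  have hfull3 := (hasSum_nat_add_iff
    (f := fun n : ℕ => A⁻¹^(n+1) *ᵥ (d1 n - d2 n)) 3).mp htail
  have hsval : x' + ∑ i ∈ Finset.range 3, A⁻¹^(i+1) *ᵥ (d1 i - d2 i) = v := by
    have e0 : d1 0 - d2 0 = 0 := by rw [hd1, hd2]; norm_num
    have e1 : d1 1 - d2 1 = v - A *ᵥ v := by rw [hd1, hd2]; norm_num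
    have e2 : d1 2 - d2 2 = v := by rw [hd1, hd2]; norm_num
    rw [Finset.sum_range_succ, Finset.sum_range_succ, Finset.sum_range_one,
      e0, e1, e2, Matrix.mulVec_zero, hx']
    norm_num
    ext i; fin_cases i <;> rfl
  rw [hsval] at hfull3
  have ht1 : HasSum (fun n : ℕ => A⁻¹^(n+1) *ᵥ d1 n) (∑' n, A⁻¹^(n+1) *ᵥ d1 n) :=
    hs1.hasSum
  have ht2 : HasSum (fun n : ℕ => A⁻¹^(n+1) *ᵥ d2 n) (∑' n, A⁻¹^(n+1) *ᵥ d2 n) :=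
    hs2.hasSum
  have hdiffsum : HasSum (fun n : ℕ => A⁻¹^(n+1) *ᵥ (d1 n - d2 n))
      ((∑' n, A⁻¹^(n+1) *ᵥ d1 n) - (∑' n, A⁻¹^(n+1) *ᵥ d2 n)) := by
    refine HasSum.congr_fun (ht1.sub ht2) (fun n => ?_)
    rw [Matrix.mulVec_sub]
  have hveq : (∑' n, A⁻¹^(n+1) *ᵥ d1 n) - (∑' n, A⁻¹^(n+1) *ᵥ d2 n) = v :=
    hdiffsum.unique hfull3
  have ht1mem : (∑' n, A⁻¹^(n+1) *ᵥ d1 n) ∈ selfAffine A {0, v, A *ᵥ v} :=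
    ⟨d1, hd1mem, ht1⟩
  have ht2mem : (∑' n, A⁻¹^(n+1) *ᵥ d2 n) ∈ selfAffine A {0, v, A *ᵥ v} :=
    ⟨d2, hd2mem, ht2⟩
  have hfin := Set.sub_mem_sub ht1mem ht2mem
  rw [hveq] at hfin
  rw [hT]
  exact hfin
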